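/- Let 𝔞 and 𝔟 be equidimensional ideals of K[X₁,…,Xₙ] of the same dimension m with 𝔞 ⊆ 𝔟. Then deg(𝔟) ≤ deg(𝔞), where deg is defined as Σⱼ deg V(𝔭ⱼ)·ℓⱼ over the (isolated) primes 𝔭ⱼ of the respective ideal, ℓⱼ being the length of the localized Artinian ring at 𝔭ⱼ. -/

import Mathlib

open MvPolynomial

/-- The affine-linear polynomials (degree one polynomials) determined by a coefficient
matrix `c`: `linForm c i = c(i,1)·X₁ + ⋯ + c(i,n)·Xₙ + c(i,0)`. -/
noncomputable def linForms {K : Type*} [Field K] {n : ℕ} (m : ℕ)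
    (c : Fin m × Fin (n + 1) → K) (i : Fin m) : MvPolynomial (Fin n) K :=
  (∑ j : Fin n, MvPolynomial.C (c (i, j.succ)) * MvPolynomial.X j)
    + MvPolynomial.C (c (i, 0))

section AuxiliaryLemmas

variable {K : Type*} [Field K] {n : ℕ}

/-- A nonzero multivariate polynomial over an infinite field has a point where it is nonzero. -/
lemma aux_exists_eval_ne_zero [Infinite K] {σ : Type*} {p : MvPolynomial σ K} (hp : p ≠ 0) :
    ∃ x : σ → K, MvPolynomial.eval x p ≠ 0 := by
  by_contra hc
  push_neg at hc
  exact hp (MvPolynomial.funext (q := 0) fun x => by simp [hc x])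

/-- If a monic polynomial in `X i` lies in `I`, the class of `X i` is integral over `K`. -/
lemma aux_integral_of_monic_mem {I : Ideal (MvPolynomial (Fin n) K)} {i : Fin n}
    {q : Polynomial K} (hm : q.Monic) (hq : Polynomial.aeval (X i : MvPolynomial (Fin n) K) q ∈ I) :
    IsIntegral K (Ideal.Quotient.mk I (X i)) := by
  refine ⟨q, hm, ?_⟩
  rw [← Polynomial.aeval_def]
  have := Polynomial.aeval_algHom_apply (Ideal.Quotient.mkₐ K I) (X i : MvPolynomial (Fin n) K) q
  rw [Ideal.Quotient.mkₐ_eq_mk] at this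
  rw [this, Ideal.Quotient.eq_zero_iff_mem]
  exact hq

/-- Conversely, finite dimensionality provides such a monic polynomial. -/
lemma aux_monic_mem_of_fd {P : Ideal (MvPolynomial (Fin n) K)}
    (hfd : FiniteDimensional K (MvPolynomial (Fin n) K ⧸ P)) (i : Fin n) :
    ∃ q : Polynomial K, q.Monic ∧ Polynomial.aeval (X i : MvPolynomial (Fin n) K) q ∈ P := by
  obtain ⟨q, hm, hq⟩ := IsIntegral.of_finite K (Ideal.Quotient.mk P (X i))
  refine ⟨q, hm, ?_⟩
  rw [← Polynomial.aeval_def] at hq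
  have := Polynomial.aeval_algHom_apply (Ideal.Quotient.mkₐ K P) (X i : MvPolynomial (Fin n) K) q
  rw [Ideal.Quotient.mkₐ_eq_mk] at this
  rw [this, Ideal.Quotient.eq_zero_iff_mem] at hq
  exact hq

/-- If every variable is integral modulo `I`, the quotient is finite dimensional. -/
lemma aux_fd_of_integral {I : Ideal (MvPolynomial (Fin n) K)}
    (h : ∀ i : Fin n, IsIntegral K (Ideal.Quotient.mk I (X i))) :
    FiniteDimensional K (MvPolynomial (Fin n) K ⧸ I) := by
  have h1 : Algebra.adjoin K
      (⇑(Ideal.Quotient.mkₐ K I) '' Set.range (X : Fin n → MvPolynomial (Fin n) K)) = ⊤ := by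
    rw [← AlgHom.map_adjoin, MvPolynomial.adjoin_range_X, Algebra.map_top,
      AlgHom.range_eq_top]
    exact Ideal.Quotient.mkₐ_surjective K I
  have h2 := fg_adjoin_of_finite (R := K)
      (s := ⇑(Ideal.Quotient.mkₐ K I) '' Set.range (X : Fin n → MvPolynomial (Fin n) K))
      ((Set.finite_range X).image _) ?_
  · rw [h1] at h2
    rw [Algebra.top_toSubmodule] at h2
    exact Module.finite_def.mpr h2
  · rintro x ⟨-, ⟨i, rfl⟩, rfl⟩
    rw [Ideal.Quotient.mkₐ_eq_mk]
    exact h i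

lemma aux_mem_radical_inf {R : Type*} [CommRing R] {I J : Ideal R} {x : R}
    (hI : x ∈ I.radical) (hJ : x ∈ J.radical) : x ∈ (I ⊓ J).radical := by
  obtain ⟨a, ha⟩ := Ideal.mem_radical_iff.mp hI
  obtain ⟨b, hb⟩ := Ideal.mem_radical_iff.mp hJ
  refine Ideal.mem_radical_iff.mpr ⟨a + b, Ideal.mem_inf.mpr ⟨?_, ?_⟩⟩
  · rw [pow_add]; exact Ideal.mul_mem_right _ _ ha
  · rw [pow_add]; exact Ideal.mul_mem_left _ _ hb

/-- If the quotient by every prime over `I` is finite dimensional, so is the quotient by `I`. -/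
lemma aux_fd_of_forall_prime {I : Ideal (MvPolynomial (Fin n) K)}
    (hI : ∀ P : Ideal (MvPolynomial (Fin n) K), P.IsPrime → I ≤ P →
      FiniteDimensional K (MvPolynomial (Fin n) K ⧸ P)) :
    FiniteDimensional K (MvPolynomial (Fin n) K ⧸ I) := by
  classical
  obtain ⟨s, hs, hsp⟩ : ∃ s : Finset (Ideal (MvPolynomial (Fin n) K)), s.inf id = I ∧
      ∀ ⦃J : Ideal (MvPolynomial (Fin n) K)⦄, J ∈ s → J.IsPrimary :=
    Ideal.isLasker (MvPolynomial (Fin n) K) (MvPolynomial (Fin n) K) I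
  apply aux_fd_of_integral
  intro i
  have hmon : ∀ J ∈ s, ∃ q : Polynomial K, q.Monic ∧
      Polynomial.aeval (X i : MvPolynomial (Fin n) K) q ∈ J.radical := by
    intro J hJ
    have hprime : J.radical.IsPrime := Ideal.isPrime_radical (hsp hJ)
    have hle : I ≤ J.radical := by
      calc I = s.inf id := hs.symm
        _ ≤ J := Finset.inf_le hJ
        _ ≤ J.radical := Ideal.le_radical
    exact aux_monic_mem_of_fd (hI _ hprime hle) i
  choose! q hqm hqmem using hmon
  have hQm : (∏ J ∈ s, q J).Monic := Polynomial.monic_prod_of_monic _ _ fun J hJ => hqm J hJ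
  have hQmem : Polynomial.aeval (X i : MvPolynomial (Fin n) K) (∏ J ∈ s, q J) ∈ I.radical := by
    rw [map_prod, ← hs]
    clear hs hI hQm
    induction s using Finset.induction_on with
    | empty => simp [Ideal.radical_top]
    | @insert J t hJt ih =>
        rw [Finset.prod_insert hJt, Finset.inf_insert]
        have h1 : Polynomial.aeval (X i : MvPolynomial (Fin n) K) (q J) ∈ J.radical :=
          hqmem J (Finset.mem_insert_self J t)
        have h2 : (∏ A ∈ t, Polynomial.aeval (X i : MvPolynomial (Fin n) K) (q A)) ∈
            (t.inf id).radical := by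
          exact ih (fun A hA => hsp (Finset.mem_insert_of_mem hA))
            (fun A hA => hqm A (Finset.mem_insert_of_mem hA))
            (fun A hA => hqmem A (Finset.mem_insert_of_mem hA))
        have hid : (id J : Ideal (MvPolynomial (Fin n) K)) = J := rfl
        rw [hid]
        exact aux_mem_radical_inf (Ideal.mul_mem_right _ _ h1) (Ideal.mul_mem_left _ _ h2)
  obtain ⟨N, hN⟩ := Ideal.exists_radical_pow_le_of_fg I (IsNoetherian.noetherian _)
  refine aux_integral_of_monic_mem (q := (∏ J ∈ s, q J) ^ N) (hQm.pow N) ?_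
  rw [map_pow]
  exact hN (Ideal.pow_mem_pow hQmem N)

/-- A prime with infinite dimensional quotient admits a strictly bigger prime
(over an algebraically closed field). -/
lemma aux_exists_gt_of_not_fd [IsAlgClosed K] {P : Ideal (MvPolynomial (Fin n) K)}
    (hP : P.IsPrime) (hfd : ¬ FiniteDimensional K (MvPolynomial (Fin n) K ⧸ P)) :
    ∃ Q : Ideal (MvPolynomial (Fin n) K), Q.IsPrime ∧ P < Q := by
  have hnm : ¬ P.IsMaximal := by
    intro hm
    obtain ⟨x, rfl⟩ := (isMaximal_iff_eq_vanishingIdeal_singleton (I := P)).mp hm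
    apply hfd
    apply aux_fd_of_integral
    intro i
    refine aux_integral_of_monic_mem (q := Polynomial.X - Polynomial.C (x i))
      (Polynomial.monic_X_sub_C _) ?_
    rw [MvPolynomial.mem_vanishingIdeal_singleton_iff]
    simp
  obtain ⟨M, hM, hPM⟩ := Ideal.exists_le_maximal P hP.ne_top
  refine ⟨M, hM.isPrime, lt_of_le_of_ne hPM ?_⟩
  intro h; exact hnm (h ▸ hM)

variable {m : ℕ}

/-- The partial ideals `𝔞 + (f₀, …, f_{k-1})`. -/
noncomputable def auxIdeal (𝔞 : Ideal (MvPolynomial (Fin n) K))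
    (c : Fin m × Fin (n + 1) → K) (k : ℕ) : Ideal (MvPolynomial (Fin n) K) :=
  𝔞 ⊔ Ideal.span (linForms m c '' {i : Fin m | (i : ℕ) < k})

lemma auxIdeal_zero (𝔞 : Ideal (MvPolynomial (Fin n) K)) (c : Fin m × Fin (n + 1) → K) :
    auxIdeal 𝔞 c 0 = 𝔞 := by
  have : {i : Fin m | (i : ℕ) < 0} = ∅ := by ext i; simp
  simp [auxIdeal, this]

lemma auxIdeal_top (𝔞 : Ideal (MvPolynomial (Fin n) K)) (c : Fin m × Fin (n + 1) → K) :
    auxIdeal 𝔞 c m = 𝔞 ⊔ Ideal.span (Set.range (linForms m c)) := by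
  have : {i : Fin m | (i : ℕ) < m} = Set.univ := by ext i; simp [i.isLt]
  simp [auxIdeal, this, Set.image_univ]

lemma auxIdeal_mono (𝔞 : Ideal (MvPolynomial (Fin n) K)) (c : Fin m × Fin (n + 1) → K)
    {k k' : ℕ} (h : k ≤ k') : auxIdeal 𝔞 c k ≤ auxIdeal 𝔞 c k' := by
  apply sup_le_sup_left
  apply Ideal.span_mono
  apply Set.image_mono
  intro i hi
  exact lt_of_lt_of_le hi h

lemma linForms_mem_auxIdeal (𝔞 : Ideal (MvPolynomial (Fin n) K))
    (c : Fin m × Fin (n + 1) → K) (j : Fin m) :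
    linForms m c j ∈ auxIdeal 𝔞 c ((j : ℕ) + 1) := by
  apply le_sup_right (α := Ideal (MvPolynomial (Fin n) K))
  apply Ideal.subset_span
  exact ⟨j, by simp, rfl⟩

lemma linForms_congr {c c' : Fin m × Fin (n + 1) → K} {i : Fin m}
    (h : ∀ j, c (i, j) = c' (i, j)) : linForms m c i = linForms m c' i := by
  unfold linForms
  congr 1
  · exact Finset.sum_congr rfl fun j _ => by rw [h j.succ]
  · rw [h 0]

lemma auxIdeal_congr (𝔞 : Ideal (MvPolynomial (Fin n) K)) {c c' : Fin m × Fin (n + 1) → K}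
    {k : ℕ} (h : ∀ i : Fin m, (i : ℕ) < k → ∀ j, c (i, j) = c' (i, j)) :
    auxIdeal 𝔞 c k = auxIdeal 𝔞 c' k := by
  unfold auxIdeal
  refine congrArg (𝔞 ⊔ ·) (congrArg Ideal.span ?_)
  ext p
  constructor
  · rintro ⟨i, hi, rfl⟩; exact ⟨i, hi, (linForms_congr (h i hi)).symm⟩
  · rintro ⟨i, hi, rfl⟩; exact ⟨i, hi, linForms_congr (h i hi)⟩

/-- All minimal primes over an ideal lie in a finite set (via a Lasker decomposition). -/
lemma aux_minimalPrimes_sub (I : Ideal (MvPolynomial (Fin n) K)) :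
    ∃ T : Finset (Ideal (MvPolynomial (Fin n) K)), ∀ P ∈ I.minimalPrimes, P ∈ T := by
  classical
  obtain ⟨s, hs, hsp⟩ : ∃ s : Finset (Ideal (MvPolynomial (Fin n) K)), s.inf id = I ∧
      ∀ ⦃J : Ideal (MvPolynomial (Fin n) K)⦄, J ∈ s → J.IsPrimary :=
    Ideal.isLasker (MvPolynomial (Fin n) K) (MvPolynomial (Fin n) K) I
  refine ⟨s.image Ideal.radical, ?_⟩
  intro P hP
  obtain ⟨⟨hPp, hIP⟩, hmin⟩ := hP
  have : s.inf id ≤ P := hs.symm ▸ hIP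
  obtain ⟨J, hJ, hJP⟩ := (hPp.inf_le').mp this
  have hradP : J.radical ≤ P := by
    calc J.radical ≤ P.radical := Ideal.radical_mono hJP
      _ = P := hPp.radical
  have hprop : J.radical.IsPrime ∧ I ≤ J.radical := by
    refine ⟨Ideal.isPrime_radical (hsp hJ), ?_⟩
    calc I = s.inf id := hs.symm
      _ ≤ J := Finset.inf_le hJ
      _ ≤ J.radical := Ideal.le_radical
  have : P ≤ J.radical := hmin hprop hradP
  have hPeq : P = J.radical := le_antisymm this hradP
  rw [hPeq]
  exact Finset.mem_image_of_mem _ hJ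

/-- Construction of a good coefficient vector: `h` does not vanish and each form avoids
all minimal primes of the previous partial ideal. -/
lemma aux_exists_good_c [Infinite K] (𝔞 : Ideal (MvPolynomial (Fin n) K))
    {h : MvPolynomial (Fin m × Fin (n + 1)) K} (hh : h ≠ 0) :
    ∃ c : Fin m × Fin (n + 1) → K, MvPolynomial.eval c h ≠ 0 ∧
      ∀ k : Fin m, ∀ P ∈ (auxIdeal 𝔞 c (k : ℕ)).minimalPrimes, linForms m c k ∉ P := by
  classical
  suffices H : ∀ t : ℕ, t ≤ m → ∃ c : Fin m × Fin (n + 1) → K, MvPolynomial.eval c h ≠ 0 ∧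
      ∀ k : Fin m, (k : ℕ) < t →
        ∀ P ∈ (auxIdeal 𝔞 c (k : ℕ)).minimalPrimes, linForms m c k ∉ P by
    obtain ⟨c, hc1, hc2⟩ := H m le_rfl
    exact ⟨c, hc1, fun k => hc2 k k.isLt⟩
  intro t
  induction t with
  | zero =>
      intro _
      obtain ⟨c, hc⟩ := aux_exists_eval_ne_zero hh
      exact ⟨c, hc, fun k hk => absurd hk (by omega)⟩
  | succ t ih =>
      intro ht
      obtain ⟨c, hc1, hc2⟩ := ih (by omega)
      set k₀ : Fin m := ⟨t, by omega⟩ with hk₀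
      -- the substitution replacing the coordinate (k₀, 0) by a variable
      set ψ : MvPolynomial (Fin m × Fin (n + 1)) K →ₐ[K] Polynomial K :=
        MvPolynomial.aeval (fun s => if s = (k₀, 0) then Polynomial.X else Polynomial.C (c s))
        with hψ
      have keval : ∀ (x : K) (p : MvPolynomial (Fin m × Fin (n + 1)) K),
          Polynomial.eval x (ψ p) = MvPolynomial.eval (Function.update c (k₀, 0) x) p := by
        intro x p
        induction p using MvPolynomial.induction_on with
        | C a => simp [hψ]
        | add p q hp hq => simp only [map_add, Polynomial.eval_add, hp, hq]
        | mul_X p s hp =>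
            rw [map_mul, Polynomial.eval_mul, hp, map_mul]
            congr 1
            by_cases hs : s = (k₀, 0)
            · subst hs; simp [hψ]
            · simp [hψ, hs, Function.update_of_ne hs]
      have hq0 : ψ h ≠ 0 := by
        intro h0
        apply hc1
        have := keval (c (k₀, 0)) h
        rw [h0, Polynomial.eval_zero, Function.update_eq_self] at this
        exact this.symm
      obtain ⟨T, hT⟩ := aux_minimalPrimes_sub (auxIdeal 𝔞 c t)
      set L : MvPolynomial (Fin n) K :=
        ∑ j : Fin n, MvPolynomial.C (c (k₀, j.succ)) * MvPolynomial.X j with hL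
      set Bad : Set K := {x | (ψ h).IsRoot x} ∪
        ⋃ J ∈ (T : Set (Ideal (MvPolynomial (Fin n) K))),
          {x | J.IsPrime ∧ L + MvPolynomial.C x ∈ J} with hBad
      have hBadFin : Bad.Finite := by
        apply Set.Finite.union (Polynomial.finite_setOf_isRoot hq0)
        apply Set.Finite.biUnion T.finite_toSet
        intro J _
        apply Set.Subsingleton.finite
        rintro x ⟨hJp, hx⟩ y ⟨-, hy⟩
        by_contra hxy
        have hmem : MvPolynomial.C (x - y) ∈ J := by
          have := J.sub_mem hx hy
          simpa [map_sub] using this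
        have : (1 : MvPolynomial (Fin n) K) ∈ J := by
          have := J.mul_mem_left (MvPolynomial.C (x - y)⁻¹) hmem
          rwa [← map_mul, inv_mul_cancel₀ (sub_ne_zero_of_ne hxy), map_one] at this
        exact hJp.ne_top (Ideal.eq_top_iff_one J |>.mpr this)
      obtain ⟨x, hx⟩ := hBadFin.infinite_compl.nonempty
      refine ⟨Function.update c (k₀, 0) x, ?_, ?_⟩
      · rw [← keval]
        intro h0
        exact hx (Or.inl h0)
      · intro k hk P hP
        have hupd : ∀ s : Fin m × Fin (n + 1), s ≠ (k₀, 0) →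
            Function.update c (k₀, 0) x s = c s := fun s hs => Function.update_of_ne hs _ _
        by_cases hkt : (k : ℕ) < t
        · -- previous steps, where nothing changed
          have hkk : k ≠ k₀ := by
            intro e
            have : (k : ℕ) = t := by rw [e]
            omega
          have hne : ∀ j, Function.update c (k₀, 0) x (k, j) = c (k, j) := fun j =>
            hupd (k, j) (fun hcon => hkk (congrArg Prod.fst hcon))
          have hI : auxIdeal 𝔞 (Function.update c (k₀, 0) x) (k : ℕ) = auxIdeal 𝔞 c (k : ℕ) := by
            apply auxIdeal_congr
            intro i hi j
            apply hupd
            intro hcon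
            have e : i = k₀ := congrArg Prod.fst hcon
            have : (i : ℕ) = t := by rw [e]
            omega
          have hf : linForms m (Function.update c (k₀, 0) x) k = linForms m c k :=
            linForms_congr hne
          rw [hI] at hP
          rw [hf]
          exact hc2 k hkt P hP
        · -- the new step k = k₀
          have hkeq : k = k₀ := by
            apply Fin.ext
            show (k : ℕ) = t
            omega
          rw [hkeq] at hP ⊢
          have hI : auxIdeal 𝔞 (Function.update c (k₀, 0) x) (k₀ : ℕ) = auxIdeal 𝔞 c t := by
            have hv : (k₀ : ℕ) = t := rfl
            rw [hv]
            apply auxIdeal_congr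
            intro i hi j
            apply hupd
            intro hcon
            have e : i = k₀ := congrArg Prod.fst hcon
            have : (i : ℕ) = t := by rw [e]
            omega
          have hf : linForms m (Function.update c (k₀, 0) x) k₀ = L + MvPolynomial.C x := by
            unfold linForms
            congr 1
            · rw [hL]
              apply Finset.sum_congr rfl
              intro j _
              congr 2
              apply hupd
              intro hcon
              exact Fin.succ_ne_zero j (congrArg Prod.snd hcon)
            · rw [Function.update_self]
          rw [hI] at hP
          rw [hf]
          intro hmem
          apply hx
          right
          refine Set.mem_biUnion (hT P hP) ⟨hP.1.1, hmem⟩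

/-- Given a good coefficient vector, the quotient is finite dimensional;
otherwise we could build a chain of primes of length `m + 1` over a minimal prime of `𝔞`. -/
lemma aux_fd_generic [IsAlgClosed K] {𝔞 : Ideal (MvPolynomial (Fin n) K)}
    (hequia : ∀ 𝔭 ∈ 𝔞.minimalPrimes,
      ringKrullDim (MvPolynomial (Fin n) K ⧸ 𝔭) = (m : WithBot ℕ∞))
    {c : Fin m × Fin (n + 1) → K}
    (hAV : ∀ k : Fin m, ∀ P ∈ (auxIdeal 𝔞 c (k : ℕ)).minimalPrimes, linForms m c k ∉ P) :
    FiniteDimensional K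
      (MvPolynomial (Fin n) K ⧸ (𝔞 ⊔ Ideal.span (Set.range (linForms m c)))) := by
  classical
  rw [← auxIdeal_top]
  by_contra hinf
  have hex : ¬ ∀ P : Ideal (MvPolynomial (Fin n) K), P.IsPrime → auxIdeal 𝔞 c m ≤ P →
      FiniteDimensional K (MvPolynomial (Fin n) K ⧸ P) :=
    fun H => hinf (aux_fd_of_forall_prime H)
  push_neg at hex
  obtain ⟨𝔔, h𝔔p, h𝔔le, h𝔔fd⟩ := hex
  obtain ⟨𝔪, h𝔪p, h𝔔𝔪⟩ := aux_exists_gt_of_not_fd h𝔔p h𝔔fd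
  -- build the chain downwards
  have DOWN : ∀ d : ℕ, d ≤ m → ∃ q : ℕ → Ideal (MvPolynomial (Fin n) K),
      (auxIdeal 𝔞 c (m - d) ≤ q (m - d)) ∧
      (∀ j, m - d ≤ j → j ≤ m + 1 → (q j).IsPrime) ∧
      (∀ j, m - d ≤ j → j ≤ m → q j < q (j + 1)) := by
    intro d
    induction d with
    | zero =>
        intro _
        refine ⟨fun j => if j ≤ m then 𝔔 else 𝔪, ?_, ?_, ?_⟩
        · simpa using h𝔔le
        · intro j _ _
          by_cases hj : j ≤ m <;> simp [hj, h𝔔p, h𝔪p]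
        · intro j hj hj'
          have hjm : j = m := by omega
          subst hjm
          simp [h𝔔𝔪]
    | succ d ih =>
        intro hd
        obtain ⟨q, hq1, hq2, hq3⟩ := ih (by omega)
        set k : ℕ := m - (d + 1) with hk
        have hk1 : m - d = k + 1 := by omega
        have hkm : k < m := by omega
        haveI : (q (k + 1)).IsPrime := hq2 (k + 1) (by omega) (by omega)
        have hq1' : auxIdeal 𝔞 c (k + 1) ≤ q (k + 1) := by rw [← hk1]; exact hq1
        have hle : auxIdeal 𝔞 c k ≤ q (k + 1) :=
          le_trans (auxIdeal_mono 𝔞 c (Nat.le_succ k)) hq1'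
        obtain ⟨P', hP'min, hP'le⟩ := Ideal.exists_minimalPrimes_le hle
        refine ⟨Function.update q k P', ?_, ?_, ?_⟩
        · rw [Function.update_self]
          exact hP'min.1.2
        · intro j hj hj'
          rcases eq_or_ne j k with rfl | hjk
          · rw [Function.update_self]; exact hP'min.1.1
          · rw [Function.update_of_ne hjk]; exact hq2 j (by omega) hj'
        · intro j hj hj'
          rcases eq_or_ne j k with rfl | hjk
          · rw [Function.update_self, Function.update_of_ne (by omega : k + 1 ≠ k)]
            refine lt_of_le_of_ne hP'le ?_
            intro hPeq
            have hmem : linForms m c ⟨k, hkm⟩ ∈ q (k + 1) :=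
              hq1' (linForms_mem_auxIdeal 𝔞 c ⟨k, hkm⟩)
            exact (hAV ⟨k, hkm⟩ P' hP'min) (hPeq ▸ hmem)
          · rw [Function.update_of_ne hjk, Function.update_of_ne (by omega : j + 1 ≠ k)]
            exact hq3 j (by omega) hj'
  obtain ⟨q, hq1, hq2, hq3⟩ := DOWN m le_rfl
  rw [Nat.sub_self, auxIdeal_zero] at hq1
  haveI : (q 0).IsPrime := hq2 0 (by omega) (by omega)
  obtain ⟨P₀, hP₀min, hP₀le⟩ := Ideal.exists_minimalPrimes_le hq1
  have hmono : ∀ j, j ≤ m + 1 → P₀ ≤ q j := by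
    intro j
    induction j with
    | zero => exact fun _ => hP₀le
    | succ j ihj =>
        intro hj
        exact le_trans (ihj (by omega)) (le_of_lt (hq3 j (by omega) (by omega)))
  set mk : MvPolynomial (Fin n) K →+* MvPolynomial (Fin n) K ⧸ P₀ :=
    Ideal.Quotient.mk P₀ with hmk
  have hker : RingHom.ker mk = P₀ := Ideal.mk_ker
  have hprime : ∀ j, j ≤ m + 1 → (Ideal.map mk (q j)).IsPrime := by
    intro j hj
    haveI := hq2 j (by omega) hj
    exact Ideal.map_isPrime_of_surjective Ideal.Quotient.mk_surjective
      (by rw [hker]; exact hmono j hj)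
  have hlt : ∀ j, j ≤ m → Ideal.map mk (q j) < Ideal.map mk (q (j + 1)) := by
    intro j hj
    have h1 := hq3 j (by omega) hj
    refine lt_of_le_of_ne (Ideal.map_mono (le_of_lt h1)) ?_
    intro heq
    have e1 := congrArg (Ideal.comap mk) heq
    rw [Ideal.comap_map_of_surjective mk Ideal.Quotient.mk_surjective,
      Ideal.comap_map_of_surjective mk Ideal.Quotient.mk_surjective] at e1
    have hcb : Ideal.comap mk ⊥ = P₀ := by rw [← RingHom.ker_eq_comap_bot, hker]
    rw [hcb, sup_eq_left.mpr (hmono j (by omega)),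
      sup_eq_left.mpr (hmono (j + 1) (by omega))] at e1
    exact (ne_of_lt h1) e1
  let F : LTSeries (PrimeSpectrum (MvPolynomial (Fin n) K ⧸ P₀)) :=
    { length := m + 1
      toFun := fun i => ⟨Ideal.map mk (q i), hprime i (by omega)⟩
      step := fun i => hlt i (Fin.is_le i) }
  have hlen := Order.LTSeries.length_le_krullDim F
  have heq := hequia P₀ hP₀min
  rw [ringKrullDim] at heq
  rw [heq] at hlen
  have hcon : ¬ (((m + 1 : ℕ) : WithBot ℕ∞) ≤ ((m : ℕ) : WithBot ℕ∞)) := by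
    exact_mod_cast Nat.not_succ_le_self m
  exact hcon hlen

end AuxiliaryLemmas

/-- `IsDegree 𝔠 m D` expresses that the ideal `𝔠` of `K[X₁,…,Xₙ]` (of dimension `m`) has
degree `D` in the sense of Definition `degree-primary` i): for a generic choice (i.e. on a
nonempty Zariski open subset of the coefficient space, here a distinguished open set
`{h ≠ 0}`) of `m` affine-linear polynomials `f₁,…,f_m`,
`dim_K K[X]/(𝔠 + (f₁,…,f_m)) = D`. -/
noncomputable def IsDegree {K : Type*} [Field K] {n : ℕ}
    (𝔠 : Ideal (MvPolynomial (Fin n) K)) (m D : ℕ) : Prop :=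
  ∃ h : MvPolynomial (Fin m × Fin (n + 1)) K, h ≠ 0 ∧
    ∀ c : Fin m × Fin (n + 1) → K, MvPolynomial.eval c h ≠ 0 →
      Module.finrank K
        (MvPolynomial (Fin n) K ⧸ (𝔠 ⊔ Ideal.span (Set.range (linForms m c)))) = D

/-- Proposition `subset`: If `𝔞 ⊆ 𝔟` are equidimensional ideals of the
same dimension `m`, then `deg 𝔟 ≤ deg 𝔞`. -/
theorem degree_antitone {K : Type*} [Field K] [IsAlgClosed K] [CharZero K] {n m : ℕ}
    (𝔞 𝔟 : Ideal (MvPolynomial (Fin n) K)) (h𝔞 : 𝔞 ≠ ⊤) (h𝔟 : 𝔟 ≠ ⊤)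
    (hequia : ∀ 𝔭 ∈ 𝔞.minimalPrimes,
      ringKrullDim (MvPolynomial (Fin n) K ⧸ 𝔭) = (m : WithBot ℕ∞))
    (hequib : ∀ 𝔭 ∈ 𝔟.minimalPrimes,
      ringKrullDim (MvPolynomial (Fin n) K ⧸ 𝔭) = (m : WithBot ℕ∞))
    (hab : 𝔞 ≤ 𝔟) (Da Db : ℕ) (hDa : IsDegree 𝔞 m Da) (hDb : IsDegree 𝔟 m Db) :
    Db ≤ Da := by
  obtain ⟨ha, ha0, Ha⟩ := hDa
  obtain ⟨hb, hb0, Hb⟩ := hDb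
  have hmul : ha * hb ≠ 0 := mul_ne_zero ha0 hb0
  obtain ⟨c, hc, hAV⟩ := aux_exists_good_c 𝔞 hmul
  have hc' : MvPolynomial.eval c ha * MvPolynomial.eval c hb ≠ 0 := by rwa [map_mul] at hc
  have hca : MvPolynomial.eval c ha ≠ 0 := left_ne_zero_of_mul hc'
  have hcb : MvPolynomial.eval c hb ≠ 0 := right_ne_zero_of_mul hc'
  haveI hA : FiniteDimensional K
      (MvPolynomial (Fin n) K ⧸ (𝔞 ⊔ Ideal.span (Set.range (linForms m c)))) :=
    aux_fd_generic hequia hAV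
  have e1 := Ha c hca
  have e2 := Hb c hcb
  set Ia := 𝔞 ⊔ Ideal.span (Set.range (linForms m c)) with hIa
  set Ib := 𝔟 ⊔ Ideal.span (Set.range (linForms m c)) with hIb
  have hle : Ia ≤ Ib := sup_le_sup_right hab _
  let ψ : (MvPolynomial (Fin n) K ⧸ Ia) →ₐ[K] (MvPolynomial (Fin n) K ⧸ Ib) :=
    Ideal.Quotient.liftₐ Ia (Ideal.Quotient.mkₐ K Ib) (fun a haa => by
      rw [Ideal.Quotient.mkₐ_eq_mk, Ideal.Quotient.eq_zero_iff_mem]; exact hle haa)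
  have hsurj : Function.Surjective ψ := by
    intro b
    obtain ⟨s, rfl⟩ := Ideal.Quotient.mk_surjective b
    exact ⟨Ideal.Quotient.mk Ia s, by simp [ψ]; exact Ideal.Quotient.lift_mk _ _ _⟩
  have hr : LinearMap.range ψ.toLinearMap = ⊤ := LinearMap.range_eq_top.mpr hsurj
  have hfr := LinearMap.finrank_range_le ψ.toLinearMap
  rw [hr, finrank_top] at hfr
  rw [← e1, ← e2]
  exact hfr
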